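/- arXiv:2510.21020 — 4 statements merged into one kernel-verified Lean document; each statement's English description precedes it below -/
import Mathlib

section
/- Let {a_t} be a real sequence with a_0 = a > 0 and a_{t+1} = a_t + c·a_t^{k-1} for all t ≥ 0, where c > 0 and k ≥ 3 is an integer. Then for all t with 0 ≤ t < 1/(c(k-2)a^{k-2}), we have a_t ≤ a / (1 - (k-2)·c·a^{k-2}·t)^{1/(k-2)}. -/
lemma bihari_aux (x : ℝ) (hx : 0 ≤ x) (n : ℕ) : (1 - n * x) * (1 + x) ^ n ≤ 1 := by
  rcases le_or_gt (1 - n * x) 0 with h | h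
  · exact le_trans (mul_nonpos_of_nonpos_of_nonneg h (by positivity)) zero_le_one
  · have h1 : (1 + x) ^ n ≤ Real.exp (n * x) := by
      calc (1 + x) ^ n ≤ (Real.exp x) ^ n :=
            pow_le_pow_left₀ (by linarith) (by linarith [Real.add_one_le_exp x]) n
        _ = Real.exp (n * x) := by rw [← Real.exp_nat_mul]
    have h2 : (1 - n * x) ≤ Real.exp (-(n * x)) := by
      linarith [Real.add_one_le_exp (-(n * x : ℝ))]
    calc (1 - n * x) * (1 + x) ^ n ≤ Real.exp (-(n * x)) * Real.exp (n * x) :=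
          mul_le_mul h2 h1 (by positivity) (Real.exp_nonneg _)
      _ = 1 := by rw [← Real.exp_add]; simp

/-- Upper bound of the discrete Bihari–LaSalle inequality for the exact
recurrence `a_{t+1} = a_t + c a_t^{k-1}`. -/
theorem stmt_1 (s : ℕ → ℝ) (a c : ℝ) (k : ℕ) (ha : 0 < a) (hc : 0 < c) (hk : 3 ≤ k)
    (h0 : s 0 = a) (hrec : ∀ t : ℕ, s (t + 1) = s t + c * (s t) ^ (k - 1)) :
    ∀ t : ℕ, (t : ℝ) < 1 / (c * (k - 2) * a ^ (k - 2)) →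
      s t ≤ a / (1 - (k - 2) * c * a ^ (k - 2) * t) ^ ((1 : ℝ) / (k - 2)) := by
  set m := k - 2 with hmdef
  have hm1 : 1 ≤ m := by omega
  have hkm : k - 1 = m + 1 := by omega
  have hmr : ((m : ℕ) : ℝ) = (k : ℝ) - 2 := by
    rw [hmdef, Nat.cast_sub (by omega)]; norm_num
  have hmpos : (0 : ℝ) < (m : ℝ) := by exact_mod_cast hm1
  have spos : ∀ t, 0 < s t := by
    intro t
    induction t with
    | zero => rw [h0]; exact ha
    | succ n ih =>
      have : 0 < c * s n ^ (k - 1) := by positivity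
      rw [hrec]; linarith
  have key : ∀ t : ℕ, 1 / a ^ m - m * c * t ≤ 1 / (s t) ^ m := by
    intro t
    induction t with
    | zero => simp [h0]
    | succ n ih =>
      have hsn := spos n
      have hx : 0 ≤ c * s n ^ m := by positivity
      have hb := bihari_aux _ hx m
      have hrw : s (n + 1) = s n * (1 + c * s n ^ m) := by
        rw [hrec n, hkm]; ring
      have hpos1 : (0 : ℝ) < 1 + c * s n ^ m := by linarith
      have hstep : 1 / (s n) ^ m - m * c ≤ 1 / (s (n + 1)) ^ m := by
        rw [hrw, mul_pow]
        rw [div_sub' (by positivity), div_le_div_iff₀ (by positivity) (by positivity)]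
        have hpm : (0 : ℝ) < (s n) ^ m := by positivity
        nlinarith [hb, hpm, pow_pos hpos1 m]
      have : (1 : ℝ) / a ^ m - m * c * (n + 1) = (1 / a ^ m - m * c * n) - m * c := by
        push_cast; ring
      push_cast
      push_cast at ih
      linarith
  intro t ht
  have hden : (0 : ℝ) < c * ((k : ℝ) - 2) * a ^ (k - 2) := by
    rw [← hmr]; positivity
  rw [lt_div_iff₀ hden] at ht
  have ht' : ((k : ℝ) - 2) * c * a ^ (k - 2) * (t : ℝ) < 1 := by nlinarith
  set D := 1 - ((k : ℝ) - 2) * c * a ^ (k - 2) * (t : ℝ) with hDdef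
  have hD : 0 < D := by simp only [hDdef]; linarith
  have hq : D / a ^ m ≤ 1 / (s t) ^ m := by
    have : D / a ^ m = 1 / a ^ m - m * c * t := by
      rw [hDdef, ← hmr]
      field_simp
      ring
    rw [this]; exact key t
  have hle : (s t) ^ m ≤ a ^ m / D := by
    rw [div_le_div_iff₀ (by positivity) (pow_pos (spos t) m)] at hq
    rw [le_div_iff₀ hD]
    nlinarith
  have hmn0 : ((m : ℕ) : ℝ) ≠ 0 := ne_of_gt hmpos
  have h1 : ((s t) ^ m : ℝ) ^ ((1 : ℝ) / m) = s t := by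
    rw [← Real.rpow_natCast (s t) m, ← Real.rpow_mul (spos t).le, mul_one_div,
      div_self hmn0, Real.rpow_one]
  have h2 : (a ^ m / D : ℝ) ^ ((1 : ℝ) / m) = a / D ^ ((1 : ℝ) / m) := by
    rw [Real.div_rpow (by positivity) hD.le, ← Real.rpow_natCast a m,
      ← Real.rpow_mul ha.le, mul_one_div, div_self hmn0, Real.rpow_one]
  have := Real.rpow_le_rpow (pow_pos (spos t) m).le hle (by positivity : (0:ℝ) ≤ 1 / m)
  rw [h1, h2] at this
  rw [← hmr]
  exact this
end

section
/- Let {a_t} be a real sequence with a_0 = a > 0 and a_{t+1} = a_t + c·a_t^{k-1} for all t ≥ 0, where c > 0 and k ≥ 3 is an integer. Then for all t with 0 ≤ t < (a^{-(k-2)} - c)/(c(k-2)) (assuming a^{-(k-2)} > c), we have a_t ≥ a / (1 - (c/2)·a^{k-2}·t)^{1/(k-2)}. -/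
lemma bern1 (y : ℝ) (hy : 0 ≤ y) : ∀ m : ℕ, (1 + y) ^ m * (1 - m * y) ≤ 1 := by
  intro m
  induction m with
  | zero => simp
  | succ n ih =>
    have h1 : (0:ℝ) ≤ (1 + y) ^ n := by positivity
    rw [pow_succ]
    push_cast
    push_cast at ih
    nlinarith [mul_nonneg h1 (mul_nonneg (by positivity : (0:ℝ) ≤ (n:ℝ)+1) (sq_nonneg y)),
      mul_nonneg h1 hy]

lemma bern2 (y : ℝ) (hy0 : 0 ≤ y) (hy1 : y ≤ 1) (m : ℕ) (hm : 1 ≤ m) :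
    1 ≤ (1 + y) ^ m * (1 - y / 2) := by
  have h1 : (1 + y) ≤ (1 + y) ^ m := le_self_pow₀ (by linarith) (by omega)
  nlinarith [sq_nonneg y]

/-- Lower bound of the discrete Bihari–LaSalle inequality for the exact
recurrence `a_{t+1} = a_t + c a_t^{k-1}`, assuming `a^{-(k-2)} > c`. -/
theorem stmt_2 (s : ℕ → ℝ) (a c : ℝ) (k : ℕ) (ha : 0 < a) (hc : 0 < c) (hk : 3 ≤ k)
    (hac : (a ^ (k - 2))⁻¹ > c)
    (h0 : s 0 = a) (hrec : ∀ t : ℕ, s (t + 1) = s t + c * (s t) ^ (k - 1)) :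
    ∀ t : ℕ, (t : ℝ) < ((a ^ (k - 2))⁻¹ - c) / (c * (k - 2)) →
      s t ≥ a / (1 - (c / 2) * a ^ (k - 2) * t) ^ ((1 : ℝ) / (k - 2)) := by
  set m := k - 2 with hmdef
  have hm1 : 1 ≤ m := by omega
  have hmr : ((m : ℕ) : ℝ) = (k : ℝ) - 2 := by
    rw [hmdef]; push_cast [Nat.cast_sub (show 2 ≤ k by omega)]; ring
  have hpos : ∀ t, 0 < s t := by
    intro t
    induction t with
    | zero => rw [h0]; exact ha
    | succ n ih => rw [hrec]; nlinarith [pow_pos ih (k-1)]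
  have hsrec : ∀ t, s (t + 1) = s t * (1 + c * s t ^ m) := by
    intro t
    rw [hrec t, show k - 1 = m + 1 from by omega, pow_succ]
    ring
  have hA : (0:ℝ) < a ^ m := pow_pos ha m
  -- lower bound on inverses
  have Hlow : ∀ t : ℕ, (a ^ m)⁻¹ - m * c * t ≤ (s t ^ m)⁻¹ := by
    intro t
    induction t with
    | zero => rw [h0]; simp
    | succ n ih =>
      have hx : 0 < s n ^ m := pow_pos (hpos n) m
      have hP : (0:ℝ) < (1 + c * s n ^ m) ^ m := by positivity
      have key : (s n ^ m)⁻¹ - m * c ≤ (s (n+1) ^ m)⁻¹ := by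
        rw [hsrec n, mul_pow,
          show (s n ^ m * (1 + c * s n ^ m) ^ m)⁻¹
            = 1 / (s n ^ m * (1 + c * s n ^ m) ^ m) from inv_eq_one_div _,
          le_div_iff₀ (by positivity)]
        have hb := bern1 (c * s n ^ m) (by positivity) m
        have expand : ((s n ^ m)⁻¹ - m * c) * (s n ^ m * (1 + c * s n ^ m) ^ m)
            = (1 + c * s n ^ m) ^ m * (1 - m * (c * s n ^ m)) := by
          field_simp
        rw [expand]
        exact hb
      push_cast
      push_cast at ih
      linarith
  -- upper bound on inverses, within the range
  have Hup : ∀ t : ℕ, (t : ℝ) ≤ ((a ^ m)⁻¹ - c) / (c * m) →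
      (s t ^ m)⁻¹ ≤ (a ^ m)⁻¹ - (c / 2) * t := by
    intro t
    induction t with
    | zero => intro _; rw [h0]; simp
    | succ n ih =>
      intro hT
      have hcm : (0:ℝ) < c * m := by
        have : (1:ℝ) ≤ (m:ℝ) := by exact_mod_cast hm1
        nlinarith
      have hnT : (n : ℝ) ≤ ((a ^ m)⁻¹ - c) / (c * m) := by
        push_cast at hT ⊢; linarith
      have ihn := ih hnT
      have hx : 0 < s n ^ m := pow_pos (hpos n) m
      -- b_n ≥ c
      have hbc : c ≤ (s n ^ m)⁻¹ := by
        have h1 : (n:ℝ) * (c * m) ≤ (a ^ m)⁻¹ - c := (le_div_iff₀ hcm).mp hnT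
        have h2 := Hlow n
        nlinarith
      -- hence c * x_n ≤ 1
      have hy1 : c * s n ^ m ≤ 1 := by
        have : c * s n ^ m ≤ (s n ^ m)⁻¹ * s n ^ m :=
          mul_le_mul_of_nonneg_right hbc (le_of_lt hx)
        rwa [inv_mul_cancel₀ (ne_of_gt hx)] at this
      have key : (s (n+1) ^ m)⁻¹ ≤ (s n ^ m)⁻¹ - c / 2 := by
        rw [hsrec n, mul_pow, inv_eq_one_div, div_le_iff₀ (by positivity)]
        have hb := bern2 (c * s n ^ m) (by positivity) hy1 m hm1
        have expand : ((s n ^ m)⁻¹ - c / 2) * (s n ^ m * (1 + c * s n ^ m) ^ m)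
            = (1 + c * s n ^ m) ^ m * (1 - c * s n ^ m / 2) := by
          field_simp
        rw [expand]
        nlinarith
      push_cast
      push_cast at ihn
      linarith
  -- main conclusion
  intro t ht
  rw [← hmr] at ht ⊢
  have hcm : (0:ℝ) < c * m := by
    have : (1:ℝ) ≤ (m:ℝ) := by exact_mod_cast hm1
    nlinarith
  have hbt := Hup t (le_of_lt ht)
  have h1 : (t:ℝ) * (c * m) < (a ^ m)⁻¹ - c := (lt_div_iff₀ hcm).mp ht
  have hm1r : (1:ℝ) ≤ (m:ℝ) := by exact_mod_cast hm1
  have htnn : (0:ℝ) ≤ (t:ℝ) := Nat.cast_nonneg t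
  have hRpos : (0:ℝ) < (a ^ m)⁻¹ - (c / 2) * t := by
    nlinarith [mul_nonneg htnn hc.le, inv_pos.mpr hA]
  have hxt : ((a ^ m)⁻¹ - (c / 2) * t)⁻¹ ≤ s t ^ m := by
    have hx : 0 < s t ^ m := pow_pos (hpos t) m
    rw [inv_le_iff_one_le_mul₀ hRpos]
    calc (1:ℝ) = (s t ^ m)⁻¹ * s t ^ m := (inv_mul_cancel₀ (ne_of_gt hx)).symm
      _ ≤ ((a ^ m)⁻¹ - (c / 2) * t) * s t ^ m :=
          mul_le_mul_of_nonneg_right hbt hx.le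
      _ = s t ^ m * ((a ^ m)⁻¹ - (c / 2) * t) := by ring
  -- denominator manipulations
  have hE : (1 - c / 2 * a ^ m * t) = a ^ m * ((a ^ m)⁻¹ - (c / 2) * t) := by
    field_simp
  have hEpos : (0:ℝ) < 1 - c / 2 * a ^ m * t := by
    rw [hE]; positivity
  set E : ℝ := 1 - c / 2 * a ^ m * t with hEdef
  set D : ℝ := E ^ ((1:ℝ) / (m:ℝ)) with hDdef
  have hDpos : 0 < D := Real.rpow_pos_of_pos hEpos _
  have hDm : D ^ m = E := by
    rw [hDdef, ← Real.rpow_natCast (E ^ ((1:ℝ)/(m:ℝ))) m, ← Real.rpow_mul hEpos.le]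
    rw [one_div_mul_cancel (by positivity : ((m:ℕ):ℝ) ≠ 0), Real.rpow_one]
  rw [ge_iff_le]
  apply le_of_pow_le_pow_left₀ (by omega : m ≠ 0) (hpos t).le
  rw [div_pow, hDm, hE]
  have hR : a ^ m / (a ^ m * ((a ^ m)⁻¹ - (c / 2) * t)) = ((a ^ m)⁻¹ - (c / 2) * t)⁻¹ := by
    exact div_mul_cancel_left₀ (ne_of_gt hA) _
  rw [hR]
  exact hxt
end

section
/- For any real numbers s and any β > 1, the standard Gaussian tail satisfies ∫_s^∞ (1/√(2π)) e^{-t²/2} dt ≥ (√(2e(β-1)) / (2β√π)) · e^{-β s²/2}. -/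
open Real MeasureTheory Set Filter

lemma aux_integral (β s : ℝ) (hβ : 0 < β) :
    ∫ t in Set.Ioi s, t * Real.exp (-(β/2) * t ^ 2)
      = Real.exp (-(β/2) * s ^ 2) / β := by
  have h := integral_Ioi_of_hasDerivAt_of_tendsto' (f := fun t => -Real.exp (-(β/2) * t ^ 2) / β)
    (f' := fun t => t * Real.exp (-(β/2) * t ^ 2)) (a := s) (m := 0)
    (fun x _ => by
      have : HasDerivAt (fun t : ℝ => -(β/2) * t ^ 2) (-(β/2) * (2 * x)) x := by
        simpa using ((hasDerivAt_pow 2 x).const_mul (-(β/2)))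
      have h2 := (this.exp).neg.div_const β
      refine h2.congr_deriv ?_
      rw [div_eq_iff (ne_of_gt hβ)]
      ring)
    ((integrable_mul_exp_neg_mul_sq (by positivity : (0:ℝ) < β/2)).integrableOn)
    ?_
  · rw [h]; ring
  · have : Tendsto (fun t : ℝ => Real.exp (-(β/2) * t ^ 2)) atTop (nhds 0) := by
      have h1 : Tendsto (fun t : ℝ => -(β/2) * t ^ 2) atTop atBot := by
        apply Tendsto.const_mul_atTop_of_neg (by linarith : -(β/2) < 0)
        exact tendsto_pow_atTop (by norm_num)
      exact Real.tendsto_exp_atBot.comp h1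
    simpa using (this.neg).div_const β

lemma key (β : ℝ) (hβ : 1 < β) (s : ℝ) (hs : 0 ≤ s) :
    Real.sqrt (2 * Real.exp 1 * (β - 1)) / (2 * β * Real.sqrt Real.pi) *
        Real.exp (-(β * s ^ 2) / 2) ≤
      ∫ t in Set.Ici s, (1 / Real.sqrt (2 * Real.pi)) * Real.exp (-(t ^ 2) / 2) := by
  have hβ0 : (0:ℝ) < β := by linarith
  have hC : Real.sqrt (Real.exp 1 * (β - 1)) * ∫ t in Set.Ioi s, t * Real.exp (-(β/2) * t ^ 2)
      ≤ ∫ t in Set.Ioi s, Real.exp (-(t ^ 2) / 2) := by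
    rw [← integral_const_mul]
    apply setIntegral_mono_on
    · exact ((integrable_mul_exp_neg_mul_sq (by positivity : (0:ℝ) < β/2)).const_mul
        _).integrableOn
    · have : Integrable (fun t : ℝ => Real.exp (-(1/2 : ℝ) * t ^ 2)) :=
        integrable_exp_neg_mul_sq (by norm_num)
      exact (this.integrableOn).congr_fun (fun t _ => by ring_nf) measurableSet_Ioi
    · exact measurableSet_Ioi
    · have hmono : ∀ t ∈ Set.Ioi s, Real.sqrt (Real.exp 1 * (β - 1)) * (t * Real.exp (-(β/2) * t ^ 2)) ≤ Real.exp (-(t ^ 2) / 2) := ?_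
      exact hmono
      intro t ht
      have ht0 : 0 ≤ t := le_trans hs (le_of_lt ht)
      have h1 : Real.exp 1 * ((β - 1) * t ^ 2) ≤ Real.exp ((β - 1) * t ^ 2) := by
        have := Real.add_one_le_exp ((β - 1) * t ^ 2 - 1)
        calc Real.exp 1 * ((β - 1) * t ^ 2)
            = Real.exp 1 * ((β - 1) * t ^ 2 - 1) + Real.exp 1 := by ring
          _ ≤ Real.exp 1 * Real.exp ((β - 1) * t ^ 2 - 1) := by
              nlinarith [Real.exp_pos ((β-1)*t^2 - 1), Real.exp_pos 1,
                Real.add_one_le_exp ((β - 1) * t ^ 2 - 1)]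
          _ = Real.exp ((β - 1) * t ^ 2) := by rw [← Real.exp_add]; ring_nf
      have h2 : Real.sqrt (Real.exp 1 * (β - 1)) * t ≤ Real.exp ((β - 1)/2 * t ^ 2) := by
        have h3 := Real.sqrt_le_sqrt h1
        rw [show Real.exp 1 * ((β - 1) * t ^ 2) = (Real.exp 1 * (β - 1)) * t ^ 2 by ring,
          Real.sqrt_mul (mul_nonneg (Real.exp_nonneg 1) (by linarith)) _, Real.sqrt_sq ht0] at h3
        calc Real.sqrt (Real.exp 1 * (β - 1)) * t ≤ Real.sqrt (Real.exp ((β - 1) * t ^ 2)) := h3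
          _ = Real.exp ((β - 1) * t ^ 2 / 2) := (Real.exp_half _).symm
          _ = Real.exp ((β - 1)/2 * t ^ 2) := by ring_nf
      calc Real.sqrt (Real.exp 1 * (β - 1)) * (t * Real.exp (-(β/2) * t ^ 2))
          = (Real.sqrt (Real.exp 1 * (β - 1)) * t) * Real.exp (-(β/2) * t ^ 2) := by ring
        _ ≤ Real.exp ((β - 1)/2 * t ^ 2) * Real.exp (-(β/2) * t ^ 2) := by
            apply mul_le_mul_of_nonneg_right h2 (Real.exp_nonneg _)
        _ = Real.exp (-(t ^ 2) / 2) := by rw [← Real.exp_add]; ring_nf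
  rw [MeasureTheory.integral_Ici_eq_integral_Ioi, MeasureTheory.integral_const_mul]
  rw [aux_integral β s hβ0] at hC
  have hconst : Real.sqrt (2 * Real.exp 1 * (β - 1)) / (2 * β * Real.sqrt Real.pi)
      = 1 / Real.sqrt (2 * Real.pi) * (Real.sqrt (Real.exp 1 * (β - 1)) / β) := by
    rw [show (2 : ℝ) * Real.exp 1 * (β - 1) = 2 * (Real.exp 1 * (β - 1)) by ring,
      Real.sqrt_mul (by norm_num)]
    have h2 : Real.sqrt 2 ≠ 0 := by positivity
    have hπ : Real.sqrt Real.pi ≠ 0 := by positivity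
    have hβ' : β ≠ 0 := ne_of_gt hβ0
    rw [Real.sqrt_mul (by norm_num : (0:ℝ) ≤ 2) Real.pi]
    field_simp
    rw [Real.sq_sqrt (by norm_num : (0:ℝ) ≤ 2)]; ring
  have hexp : Real.exp (-(β * s ^ 2) / 2) = Real.exp (-(β/2) * s ^ 2) := by ring_nf
  rw [hconst, hexp]
  calc 1 / Real.sqrt (2 * Real.pi) * (Real.sqrt (Real.exp 1 * (β - 1)) / β) *
        Real.exp (-(β/2) * s ^ 2)
      = 1 / Real.sqrt (2 * Real.pi) *
          (Real.sqrt (Real.exp 1 * (β - 1)) * (Real.exp (-(β/2) * s ^ 2) / β)) := by ring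
    _ ≤ 1 / Real.sqrt (2 * Real.pi) * ∫ t in Set.Ioi s, Real.exp (-(t ^ 2) / 2) := by
        apply mul_le_mul_of_nonneg_left hC (by positivity)

/-- Chernoff-type lower bound on the Gaussian tail: for all `s : ℝ` and `β > 1`,
`∫_s^∞ (1/√(2π)) e^{-t²/2} dt ≥ (√(2e(β-1))/(2β√π)) e^{-β s²/2}`. -/
theorem stmt_5 (s β : ℝ) (hβ : 1 < β) :
    Real.sqrt (2 * Real.exp 1 * (β - 1)) / (2 * β * Real.sqrt Real.pi) *
        Real.exp (-(β * s ^ 2) / 2) ≤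
      ∫ t in Set.Ici s, (1 / Real.sqrt (2 * Real.pi)) * Real.exp (-(t ^ 2) / 2) := by
  rcases le_or_gt 0 s with hs | hs
  · exact key β hβ s hs
  have hint : Integrable (fun t : ℝ => (1 / Real.sqrt (2 * Real.pi)) * Real.exp (-(t ^ 2) / 2)) := by
    have : Integrable (fun t : ℝ => Real.exp (-(1/2 : ℝ) * t ^ 2)) :=
      integrable_exp_neg_mul_sq (by norm_num)
    exact (this.const_mul (1 / Real.sqrt (2 * Real.pi))).congr
      (Filter.Eventually.of_forall fun t => by ring_nf)
  calc Real.sqrt (2 * Real.exp 1 * (β - 1)) / (2 * β * Real.sqrt Real.pi) *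
        Real.exp (-(β * s ^ 2) / 2)
      ≤ Real.sqrt (2 * Real.exp 1 * (β - 1)) / (2 * β * Real.sqrt Real.pi) *
        Real.exp (-(β * (0:ℝ) ^ 2) / 2) := by
        apply mul_le_mul_of_nonneg_left _ (by positivity)
        apply Real.exp_le_exp.2
        nlinarith [sq_nonneg s]
    _ ≤ ∫ t in Set.Ici (0:ℝ), (1 / Real.sqrt (2 * Real.pi)) * Real.exp (-(t ^ 2) / 2) :=
        key β hβ 0 le_rfl
    _ ≤ ∫ t in Set.Ici s, (1 / Real.sqrt (2 * Real.pi)) * Real.exp (-(t ^ 2) / 2) := by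
        apply setIntegral_mono_set hint.integrableOn
        · exact Filter.Eventually.of_forall fun t => by positivity
        · exact Filter.Eventually.of_forall (Set.Ici_subset_Ici.2 hs.le)
end

section
/- Let w ∈ ℝ^d be a unit vector, g ∈ ℝ^d arbitrary with ⟨w, g⟩ = 0, γ > 0, and θ ∈ ℝ^d a unit vector with ⟨θ, w⟩ ≥ 0. Then ⟨θ, (w + γg)/‖w + γg‖⟩ ≥ ⟨θ, w⟩ + γ⟨θ, g⟩ − γ²⟨θ, w⟩‖g‖² − γ³|⟨θ, g⟩|·‖g‖². -/
open scoped RealInnerProductSpace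

/-- Normalization error bound for a spherical gradient update. -/
theorem stmt_6 (d : ℕ) (w g θ : EuclideanSpace ℝ (Fin d)) (γ : ℝ)
    (hw : ‖w‖ = 1) (hθ : ‖θ‖ = 1) (horth : ⟪w, g⟫ = 0) (hγ : 0 < γ)
    (halign : 0 ≤ ⟪θ, w⟫) :
    ⟪θ, ‖w + γ • g‖⁻¹ • (w + γ • g)⟫ ≥
      ⟪θ, w⟫ + γ * ⟪θ, g⟫ - γ ^ 2 * ⟪θ, w⟫ * ‖g‖ ^ 2 - γ ^ 3 * |⟪θ, g⟫| * ‖g‖ ^ 2 := by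
  set a := ⟪θ, w⟫ with ha
  set b := ⟪θ, g⟫ with hb
  set N := ‖w + γ • g‖ with hN
  set s := ‖g‖ with hs
  have hs0 : 0 ≤ s := norm_nonneg _
  have hN2 : N ^ 2 = 1 + γ ^ 2 * s ^ 2 := by
    have := @norm_add_sq_real (EuclideanSpace ℝ (Fin d)) _ _ w (γ • g)
    rw [inner_smul_right, horth, norm_smul] at this
    simp only [hN, this, hw, Real.norm_eq_abs, abs_of_pos hγ]
    ring
  have hN1 : 1 ≤ N := by nlinarith [norm_nonneg (w + γ • g)]
  have hNpos : 0 < N := lt_of_lt_of_le one_pos hN1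
  have hinner : ⟪θ, N⁻¹ • (w + γ • g)⟫ = N⁻¹ * (a + γ * b) := by
    rw [inner_smul_right, inner_add_right, inner_smul_right]
  rw [hinner]
  have hbb : b ≤ |b| := le_abs_self b
  have hbb' : -b ≤ |b| := neg_le_abs b
  have htN : γ ^ 2 * s ^ 2 = (N - 1) * (N + 1) := by nlinarith
  have hab : 0 ≤ a + γ * |b| := add_nonneg halign (mul_nonneg hγ.le (abs_nonneg b))
  have h1 : 0 ≤ (N - 1) * (a + γ * |b|) := mul_nonneg (sub_nonneg.2 hN1) hab
  have h2 : 0 ≤ N * (N + 1) - 1 := by nlinarith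
  have h3 : 0 ≤ (N - 1) * (a + γ * |b|) * (N * (N + 1) - 1) := mul_nonneg h1 h2
  have h4 : 0 ≤ γ * (N - 1) * (|b| - b) :=
    mul_nonneg (mul_nonneg hγ.le (sub_nonneg.2 hN1)) (sub_nonneg.2 hbb)
  have key : N * (a + γ * b - γ ^ 2 * a * s ^ 2 - γ ^ 3 * |b| * s ^ 2) ≤ a + γ * b := by
    have : N * (a + γ * b - γ ^ 2 * a * s ^ 2 - γ ^ 3 * |b| * s ^ 2)
        = (a + γ * b) + (N - 1) * (a + γ * b)
          - N * ((N - 1) * (N + 1)) * (a + γ * |b|) := by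
      rw [← htN]; ring
    nlinarith [h3, h4]
  rw [ge_iff_le, inv_mul_eq_div, le_div_iff₀ hNpos]
  linarith [key]
end
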